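/- Let X, Y be Hilbert spaces, A : X → Y a compact linear operator with singular system (σₙ; vₙ, uₙ), where σₙ > 0 are the singular values and {uₙ} is an orthonormal basis of the closure of R(A). Then y ∈ R(A) ⊕ R(A)^⊥ if and only if Σₙ |⟨y, uₙ⟩|² / σₙ² < ∞ (Picard's criterion). -/

import Mathlib

noncomputable section
open Filter Topology Submodule
open scoped InnerProductSpace

/-- `(σ; v, u)` is a singular system of the compact operator `A`:
the `σ n` are positive and tend to `0`, `v` is an orthonormal basis of `N(A)ᗮ = cl R(A*)`,
`u` is an orthonormal basis of `cl R(A)`, and `A x = Σₙ σₙ ⟨x, vₙ⟩ uₙ`. -/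
structure IsSingularSystem {X Y : Type*}
    [NormedAddCommGroup X] [InnerProductSpace ℂ X] [CompleteSpace X]
    [NormedAddCommGroup Y] [InnerProductSpace ℂ Y] [CompleteSpace Y]
    (A : X →L[ℂ] Y) (σ : ℕ → ℝ) (v : ℕ → X) (u : ℕ → Y) : Prop where
  compact : IsCompactOperator A
  pos : ∀ n, 0 < σ n
  tendsto_zero : Tendsto σ atTop (nhds 0)
  orthonormal_v : Orthonormal ℂ v
  orthonormal_u : Orthonormal ℂ u
  dense_v : (span ℂ (Set.range v)).topologicalClosure = (LinearMap.ker (A : X →ₗ[ℂ] Y))ᗮ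
  dense_u : (span ℂ (Set.range u)).topologicalClosure = (LinearMap.range (A : X →ₗ[ℂ] Y)).topologicalClosure
  svd : ∀ x : X, A x = ∑' n, ((σ n : ℂ) * ⟪v n, x⟫_ℂ) • u n

/-- An orthonormal series with ℓ² coefficients is summable. -/
lemma summable_smul_of_orthonormal {E : Type*} [NormedAddCommGroup E]
    [InnerProductSpace ℂ E] [CompleteSpace E] {u : ℕ → E} (hu : Orthonormal ℂ u)
    {c : ℕ → ℂ} (hc : Summable fun n => ‖c n‖ ^ 2) :
    Summable fun n => c n • u n := by
  have := (hu.orthogonalFamily.summable_iff_norm_sq_summable c).mpr hc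
  simpa [LinearIsometry.toSpanSingleton_apply] using this

/-- Inner product of a basis vector with an orthonormal series recovers the coefficient. -/
lemma inner_tsum_orthonormal {E : Type*} [NormedAddCommGroup E]
    [InnerProductSpace ℂ E] [CompleteSpace E] {u : ℕ → E} (hu : Orthonormal ℂ u)
    {c : ℕ → ℂ} (hc : Summable fun n => ‖c n‖ ^ 2) (m : ℕ) :
    ⟪u m, ∑' n, c n • u n⟫_ℂ = c m := by
  classical
  have hsum := summable_smul_of_orthonormal hu hc
  have h1 : ⟪u m, ∑' n, c n • u n⟫_ℂ = ∑' n, c n * ⟪u m, u n⟫_ℂ := by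
    simpa [inner_smul_right] using (innerSL ℂ (u m)).map_tsum hsum
  have h2 : ∀ n, c n * ⟪u m, u n⟫_ℂ = if n = m then c n else 0 := by
    intro n
    rcases eq_or_ne n m with rfl | h
    · have h3 : ⟪u n, u n⟫_ℂ = 1 := by simpa using orthonormal_iff_ite.mp hu n n
      rw [h3, mul_one, if_pos rfl]
    · simp [hu.2 (Ne.symm h), h]
  rw [h1, tsum_congr h2, tsum_eq_single m (fun n hn => if_neg hn), if_pos rfl]

theorem stmt6 {X Y : Type*} [NormedAddCommGroup X] [InnerProductSpace ℂ X] [CompleteSpace X]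
    [NormedAddCommGroup Y] [InnerProductSpace ℂ Y] [CompleteSpace Y]
    (A : X →L[ℂ] Y) (σ : ℕ → ℝ) (v : ℕ → X) (u : ℕ → Y)
    (hsys : IsSingularSystem A σ v u) (y : Y) :
    y ∈ LinearMap.range (A : X →ₗ[ℂ] Y) ⊔ (LinearMap.range (A : X →ₗ[ℂ] Y))ᗮ ↔
      Summable (fun n => ‖⟪u n, y⟫_ℂ‖ ^ 2 / σ n ^ 2) := by
  obtain ⟨C, hC⟩ : ∃ C : ℝ, ∀ n, σ n ≤ C := by
    obtain ⟨C, hC⟩ := hsys.tendsto_zero.bddAbove_range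
    exact ⟨C, fun n => hC ⟨n, rfl⟩⟩
  have hσC : ∀ n, σ n ^ 2 ≤ C ^ 2 := fun n => by nlinarith [hsys.pos n, hC n]
  have hσpos := hsys.pos
  have hu := hsys.orthonormal_u
  have hv := hsys.orthonormal_v
  -- u n lies in the closure of the range of A
  have hu_mem : ∀ n, u n ∈ (LinearMap.range (A : X →ₗ[ℂ] Y)).topologicalClosure := by
    intro n
    rw [← hsys.dense_u]
    exact Submodule.le_topologicalClosure _ (Submodule.subset_span ⟨n, rfl⟩)
  constructor
  · rintro hy
    rw [Submodule.mem_sup] at hy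
    obtain ⟨a, ⟨x, rfl⟩, b, hb, rfl⟩ := hy
    -- coefficients of A x
    have hcsq : Summable fun n => ‖(σ n : ℂ) * ⟪v n, x⟫_ℂ‖ ^ 2 := by
      apply Summable.of_nonneg_of_le (fun n => by positivity)
        (fun n => ?_) ((hv.inner_products_summable x).mul_left (C ^ 2))
      have h1 : ‖(σ n : ℂ) * ⟪v n, x⟫_ℂ‖ ^ 2 = σ n ^ 2 * ‖⟪v n, x⟫_ℂ‖ ^ 2 := by
        rw [norm_mul, mul_pow, Complex.norm_real, Real.norm_of_nonneg (hσpos n).le]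
      rw [h1]
      exact mul_le_mul_of_nonneg_right (hσC n) (by positivity)
    have hinner_b : ∀ n, ⟪u n, b⟫_ℂ = 0 := by
      intro n
      rw [← inner_conj_symm, show ⟪b, u n⟫_ℂ = 0 from ?_, map_zero]
      have hclosed : IsClosed (LinearMap.ker (innerSL ℂ b : Y →ₗ[ℂ] ℂ) : Set Y) :=
        ContinuousLinearMap.isClosed_ker (innerSL ℂ b)
      have hle : LinearMap.range (A : X →ₗ[ℂ] Y) ≤ LinearMap.ker (innerSL ℂ b : Y →ₗ[ℂ] ℂ) := by
        rintro w hw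
        simpa using (Submodule.mem_orthogonal' _ b).mp hb w hw
      have := Submodule.topologicalClosure_minimal _ hle hclosed (hu_mem n)
      simpa only [LinearMap.mem_ker, ContinuousLinearMap.coe_coe, innerSL_apply_apply] using this
    have hkey : ∀ n, ⟪u n, A x + b⟫_ℂ = (σ n : ℂ) * ⟪v n, x⟫_ℂ := by
      intro n
      rw [inner_add_right, hinner_b, add_zero, hsys.svd x,
        inner_tsum_orthonormal hu hcsq]
    have : (fun n => ‖⟪u n, A x + b⟫_ℂ‖ ^ 2 / σ n ^ 2) = fun n => ‖⟪v n, x⟫_ℂ‖ ^ 2 := by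
      funext n
      rw [hkey, norm_mul, mul_pow, Complex.norm_real,
        Real.norm_of_nonneg (hσpos n).le,
        mul_div_cancel_left₀ _ (pow_ne_zero 2 (hσpos n).ne')]
    rw [show (A : X →ₗ[ℂ] Y) x = A x from rfl, this]
    exact hv.inner_products_summable x
  · intro hsum
    set c : ℕ → ℂ := fun n => ⟪u n, y⟫_ℂ / (σ n : ℂ) with hc
    have hcsq : Summable fun n => ‖c n‖ ^ 2 := by
      convert hsum using 2 with n
      rw [hc]
      simp only [norm_div, div_pow, Complex.norm_real, Real.norm_of_nonneg (hσpos n).le]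
    set x : X := ∑' n, c n • v n with hx
    have hvx : ∀ m, ⟪v m, x⟫_ℂ = c m := fun m => inner_tsum_orthonormal hv hcsq m
    have hysq : Summable fun n => ‖⟪u n, y⟫_ℂ‖ ^ 2 := by
      apply Summable.of_nonneg_of_le (fun n => by positivity)
        (fun n => ?_) (hsum.mul_left (C ^ 2))
      have hne2 : (σ n : ℝ) ^ 2 ≠ 0 := pow_ne_zero 2 (hσpos n).ne'
      have h5 : ‖⟪u n, y⟫_ℂ‖ ^ 2 = σ n ^ 2 * (‖⟪u n, y⟫_ℂ‖ ^ 2 / σ n ^ 2) :=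
        ((mul_comm _ _).trans (div_mul_cancel₀ _ hne2)).symm
      calc ‖⟪u n, y⟫_ℂ‖ ^ 2 = σ n ^ 2 * (‖⟪u n, y⟫_ℂ‖ ^ 2 / σ n ^ 2) := h5
        _ ≤ C ^ 2 * (‖⟪u n, y⟫_ℂ‖ ^ 2 / σ n ^ 2) :=
          mul_le_mul_of_nonneg_right (hσC n) (div_nonneg (sq_nonneg _) (sq_nonneg _))
    have hAx : A x = ∑' n, ⟪u n, y⟫_ℂ • u n := by
      rw [hsys.svd x]
      congr 1
      funext n
      rw [hvx n, hc]
      have hne : (σ n : ℂ) ≠ 0 := by exact_mod_cast (hσpos n).ne'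
      rw [mul_comm, div_mul_cancel₀ _ hne]
    have hinner_b : ∀ m, ⟪u m, y - A x⟫_ℂ = 0 := by
      intro m
      rw [inner_sub_right, hAx, inner_tsum_orthonormal hu hysq, sub_self]
    have hb : y - A x ∈ (LinearMap.range (A : X →ₗ[ℂ] Y))ᗮ := by
      rw [Submodule.mem_orthogonal']
      intro w hw
      have hclosed : IsClosed (LinearMap.ker (innerSL ℂ (y - A x) : Y →ₗ[ℂ] ℂ) : Set Y) :=
        ContinuousLinearMap.isClosed_ker (innerSL ℂ (y - A x))
      have hle : span ℂ (Set.range u) ≤ LinearMap.ker (innerSL ℂ (y - A x) : Y →ₗ[ℂ] ℂ) := by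
        rw [Submodule.span_le]
        rintro _ ⟨n, rfl⟩
        simp only [SetLike.mem_coe, LinearMap.mem_ker, ContinuousLinearMap.coe_coe, innerSL_apply_apply]
        rw [← inner_conj_symm, hinner_b, map_zero]
      have h2 : (LinearMap.range (A : X →ₗ[ℂ] Y)).topologicalClosure ≤
          LinearMap.ker (innerSL ℂ (y - A x) : Y →ₗ[ℂ] ℂ) := by
        rw [← hsys.dense_u]
        exact Submodule.topologicalClosure_minimal _ hle hclosed
      have := h2 ((LinearMap.range (A : X →ₗ[ℂ] Y)).le_topologicalClosure hw)
      simpa only [LinearMap.mem_ker, ContinuousLinearMap.coe_coe, innerSL_apply_apply] using this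
    rw [Submodule.mem_sup]
    exact ⟨A x, ⟨x, rfl⟩, y - A x, hb, by abel⟩
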